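/- Let (Ω, 𝓕, μ) be a probability space and (r_i)_{i≥1} a sequence of independent, identically distributed real-valued random variables with E[r_i] = R and |r_i| ≤ R_max almost surely, where R_max > 0. For a natural m ≥ 1 let r̄_m = (1/m)·∑_{i=1}^m r_i. Let c ∈ (0,1), let t ≥ 1 be a natural number with c·t ≥ 1, let ε > 0, and let A : Ω → ℕ be a random variable (not assumed independent of the r_i) with c·t ≤ A ≤ t almost surely. If moreover (1−c)·t + 1 ≤ exp(c·t·ε²/(4·R_max²)), then μ{ω : |r̄_{A(ω)}(ω) − R| > ε} ≤ 2·exp(−c·t·ε²/(4·R_max²)). -/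

import Mathlib

open MeasureTheory ProbabilityTheory Real

lemma hoeff_scalar {p : ℝ} (hp0 : 0 ≤ p) (hp1 : p ≤ 1) (u : ℝ) :
    (1 - p) * Real.exp (-(p * u)) + p * Real.exp ((1 - p) * u) ≤ Real.exp (u ^ 2 / 8) := by
  rcases eq_or_lt_of_le hp1 with h1 | h1
  · subst h1; simp [Real.exp_pos, Real.one_le_exp_iff]
    positivity
  set q : ℝ := 1 - p with hq
  have hq0 : 0 < q := by simp [hq]; linarith
  clear_value q
  set D : ℝ → ℝ := fun u => q + p * Real.exp u with hD
  have hDpos : ∀ u, 0 < D u := fun u => by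
    have := Real.exp_pos u
    have : 0 ≤ p * Real.exp u := by positivity
    simp only [hD]; linarith
  set f : ℝ → ℝ := fun u => u ^ 2 / 8 + p * u - Real.log (D u) with hf
  set φ : ℝ → ℝ := fun u => u / 4 + p - p * Real.exp u / D u with hφ
  have hDder : ∀ x, HasDerivAt D (p * Real.exp x) x := fun x => by
    exact ((Real.hasDerivAt_exp x).const_mul p).const_add q
  have hfder : ∀ x, HasDerivAt f (φ x) x := by
    intro x
    have h1' : HasDerivAt (fun u : ℝ => u ^ 2 / 8) (x / 4) x := by
      simpa [mul_comm] using (hasDerivAt_pow 2 x).div_const 8 |>.congr_deriv (by ring_nf)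
    have h2' : HasDerivAt (fun u : ℝ => p * u) p x := by
      simpa using (hasDerivAt_id x).const_mul p
    have h3' : HasDerivAt (fun u : ℝ => Real.log (D u)) (p * Real.exp x / D x) x :=
      (hDder x).log (hDpos x).ne'
    exact (h1'.add h2').sub h3'
  have hφder : ∀ x, HasDerivAt φ (1 / 4 - p * Real.exp x * q / (D x) ^ 2) x := by
    intro x
    have h1' : HasDerivAt (fun u : ℝ => u / 4 + p) (1 / 4) x := by
      simpa using (hasDerivAt_id x).div_const 4 |>.add_const p
    have h2' : HasDerivAt (fun u : ℝ => p * Real.exp u / D u)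
        ((p * Real.exp x * D x - p * Real.exp x * (p * Real.exp x)) / (D x) ^ 2) x :=
      ((Real.hasDerivAt_exp x).const_mul p).div (hDder x) (hDpos x).ne'
    have heq : (p * Real.exp x * D x - p * Real.exp x * (p * Real.exp x)) / (D x) ^ 2
        = p * Real.exp x * q / (D x) ^ 2 := by
      congr 1; simp only [hD]; ring
    rw [heq] at h2'
    exact h1'.sub h2'
  have hφmono : Monotone φ := by
    refine monotone_of_deriv_nonneg (fun x => (hφder x).differentiableAt) (fun x => ?_)
    rw [(hφder x).deriv]
    have hd := hDpos x
    have he := Real.exp_pos x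
    rw [sub_nonneg, div_le_iff₀ (by positivity)]
    simp only [hD]
    nlinarith [sq_nonneg (q - p * Real.exp x)]
  have hφ0 : φ 0 = 0 := by
    simp only [hφ, hD, Real.exp_zero, mul_one, hq]
    field_simp
    ring
  have hf0 : f 0 = 0 := by
    simp only [hf, hD, Real.exp_zero, mul_one, hq]
    norm_num
  have hfnonneg : ∀ x, 0 ≤ f x := by
    intro x
    have hdiff : Differentiable ℝ f := fun x => (hfder x).differentiableAt
    rcases le_total 0 x with hx | hx
    · have hm : MonotoneOn f (Set.Ici 0) := by
        refine monotoneOn_of_deriv_nonneg (convex_Ici 0) hdiff.continuous.continuousOn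
          hdiff.differentiableOn (fun y hy => ?_)
        rw [(hfder y).deriv]
        rw [interior_Ici] at hy
        have := hφmono (le_of_lt hy)
        rw [hφ0] at this; exact this
      have := hm (Set.self_mem_Ici) hx hx
      rwa [hf0] at this
    · have hm : AntitoneOn f (Set.Iic 0) := by
        refine antitoneOn_of_deriv_nonpos (convex_Iic 0) hdiff.continuous.continuousOn
          hdiff.differentiableOn (fun y hy => ?_)
        rw [(hfder y).deriv]
        rw [interior_Iic] at hy
        have := hφmono (le_of_lt hy)
        rw [hφ0] at this; exact this
      have := hm hx (Set.self_mem_Iic) hx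
      rwa [hf0] at this
  have hlog : Real.log (D u) ≤ u ^ 2 / 8 + p * u := by
    have := hfnonneg u; simp only [hf] at this; linarith
  have hDle : D u ≤ Real.exp (u ^ 2 / 8 + p * u) :=
    (Real.log_le_iff_le_exp (hDpos u)).mp hlog
  have hrw : (1 - p) * Real.exp (-(p * u)) + p * Real.exp ((1 - p) * u)
      = Real.exp (-(p * u)) * D u := by
    simp only [hD, hq]
    rw [show (1 - p) * u = u + -(p*u) by ring, Real.exp_add]
    ring
  rw [hq] at *
  rw [hrw]
  calc Real.exp (-(p * u)) * D u ≤ Real.exp (-(p * u)) * Real.exp (u ^ 2 / 8 + p * u) := by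
        exact mul_le_mul_of_nonneg_left hDle (Real.exp_pos _).le
    _ = Real.exp (u ^ 2 / 8) := by rw [← Real.exp_add]; ring_nf

lemma mgf_bdd {Ω : Type*} [MeasurableSpace Ω] (μ : Measure Ω) [IsProbabilityMeasure μ]
    (X : Ω → ℝ) (hX : Measurable X) (Rmax m0 : ℝ) (hR : 0 < Rmax)
    (hb : ∀ᵐ ω ∂μ, |X ω| ≤ Rmax) (hm : ∫ ω, X ω ∂μ = m0) (s : ℝ) :
    mgf X μ s ≤ Real.exp (s * m0 + s ^ 2 * Rmax ^ 2 / 2) := by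
  have hXint : Integrable X μ := by
    refine (integrable_const Rmax).mono' hX.aestronglyMeasurable ?_
    filter_upwards [hb] with ω h using by simpa using h
  have hm0 : |m0| ≤ Rmax := by
    rw [← hm]
    calc |∫ ω, X ω ∂μ| ≤ ∫ ω, |X ω| ∂μ := by
          simpa [Real.norm_eq_abs] using norm_integral_le_integral_norm (μ := μ) X
      _ ≤ ∫ _, Rmax ∂μ := integral_mono_ae hXint.abs (integrable_const _) hb
      _ = Rmax := by simp
  set a := Real.exp (-(s * Rmax)) with ha
  set b := Real.exp (s * Rmax) with hbdef
  set α := (a + b) / 2 with hα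
  set β := (b - a) / (2 * Rmax) with hβ
  -- pointwise bound
  have hpt : ∀ x : ℝ, |x| ≤ Rmax → Real.exp (s * x) ≤ α + β * x := by
    intro x hx
    rw [abs_le] at hx
    have hl : (0:ℝ) ≤ (Rmax - x) / (2 * Rmax) := by
      apply div_nonneg <;> linarith
    have hl' : (0:ℝ) ≤ (Rmax + x) / (2 * Rmax) := by
      apply div_nonneg <;> linarith
    have hsum : (Rmax - x) / (2 * Rmax) + (Rmax + x) / (2 * Rmax) = 1 := by
      field_simp; ring
    have hc := convexOn_exp.2 (Set.mem_univ (-(s * Rmax))) (Set.mem_univ (s * Rmax))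
      hl hl' hsum
    simp only [smul_eq_mul] at hc
    have he1 : (Rmax - x) / (2 * Rmax) * -(s * Rmax) + (Rmax + x) / (2 * Rmax) * (s * Rmax)
        = s * x := by field_simp; ring
    rw [he1] at hc
    refine hc.trans_eq ?_
    simp only [hα, hβ, ha, hbdef]
    field_simp
    ring
  -- integrate
  have hint : Integrable (fun ω => Real.exp (s * X ω)) μ := by
    refine (integrable_const (Real.exp (|s| * Rmax))).mono'
      ((hX.const_mul s).exp).aestronglyMeasurable ?_
    filter_upwards [hb] with ω h
    rw [Real.norm_eq_abs, abs_of_pos (Real.exp_pos _), Real.exp_le_exp]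
    calc s * X ω ≤ |s * X ω| := le_abs_self _
      _ = |s| * |X ω| := abs_mul _ _
      _ ≤ |s| * Rmax := by
          exact mul_le_mul_of_nonneg_left h (abs_nonneg s)
  have hmgf : mgf X μ s ≤ α + β * m0 := by
    rw [mgf]
    calc ∫ ω, Real.exp (s * X ω) ∂μ ≤ ∫ ω, α + β * X ω ∂μ := by
          refine integral_mono_ae hint ((integrable_const α).add (hXint.const_mul β)) ?_
          filter_upwards [hb] with ω h using hpt _ h
      _ = α + β * m0 := by
          rw [integral_add (integrable_const α) (hXint.const_mul β), integral_const,
            integral_const_mul, hm]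
          simp
  refine hmgf.trans ?_
  -- apply scalar lemma with p = (Rmax + m0)/(2 Rmax), u = 2 s Rmax
  set p := (Rmax + m0) / (2 * Rmax) with hp
  rw [abs_le] at hm0
  have hp0 : 0 ≤ p := by apply div_nonneg <;> linarith
  have hp1 : p ≤ 1 := by rw [div_le_one (by linarith)]; linarith
  have key := hoeff_scalar hp0 hp1 (2 * s * Rmax)
  have heq : α + β * m0 = Real.exp (s * m0) *
      ((1 - p) * Real.exp (-(p * (2 * s * Rmax))) + p * Real.exp ((1 - p) * (2 * s * Rmax))) := by
    have e1 : -(p * (2 * s * Rmax)) = -(s * Rmax) + -(s * m0) := by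
      simp only [hp]; field_simp; ring
    have e2 : (1 - p) * (2 * s * Rmax) = s * Rmax + -(s * m0) := by
      simp only [hp]; field_simp; ring
    rw [e1, e2]
    have h1 : Real.exp (s * Rmax) ≠ 0 := (Real.exp_pos _).ne'
    have h2 : Real.exp (s * m0) ≠ 0 := (Real.exp_pos _).ne'
    simp only [hα, hβ, ha, hbdef, hp, Real.exp_add, Real.exp_neg]
    field_simp
    ring
  rw [heq]
  calc Real.exp (s * m0) *
      ((1 - p) * Real.exp (-(p * (2 * s * Rmax))) + p * Real.exp ((1 - p) * (2 * s * Rmax)))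
      ≤ Real.exp (s * m0) * Real.exp ((2 * s * Rmax) ^ 2 / 8) :=
        mul_le_mul_of_nonneg_left key (Real.exp_pos _).le
    _ = Real.exp (s * m0 + s ^ 2 * Rmax ^ 2 / 2) := by rw [← Real.exp_add]; congr 1; ring

lemma integrable_exp_mul_bdd {Ω : Type*} [MeasurableSpace Ω] (μ : Measure Ω)
    [IsProbabilityMeasure μ] (X : Ω → ℝ) (hX : Measurable X) (Rmax : ℝ)
    (hb : ∀ᵐ ω ∂μ, |X ω| ≤ Rmax) (s : ℝ) :
    Integrable (fun ω => Real.exp (s * X ω)) μ := by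
  refine (integrable_const (Real.exp (|s| * Rmax))).mono'
    ((hX.const_mul s).exp).aestronglyMeasurable ?_
  filter_upwards [hb] with ω h
  rw [Real.norm_eq_abs, abs_of_pos (Real.exp_pos _), Real.exp_le_exp]
  calc s * X ω ≤ |s * X ω| := le_abs_self _
    _ = |s| * |X ω| := abs_mul _ _
    _ ≤ |s| * Rmax := mul_le_mul_of_nonneg_left h (abs_nonneg s)

lemma tail_fixed {Ω : Type*} [MeasurableSpace Ω] (μ : Measure Ω) [IsProbabilityMeasure μ]
    (r : ℕ → Ω → ℝ) (R Rmax : ℝ) (hRmax : 0 < Rmax)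
    (hmeas : ∀ i, Measurable (r i))
    (hindep : iIndepFun r μ)
    (hmean : ∀ i, 1 ≤ i → ∫ ω, r i ω ∂μ = R)
    (hbdd : ∀ i, 1 ≤ i → ∀ᵐ ω ∂μ, |r i ω| ≤ Rmax)
    (ε : ℝ) (hε : 0 < ε) (m : ℕ) (hm : 1 ≤ m) :
    μ {ω | ε < |((m : ℝ))⁻¹ * (∑ i ∈ Finset.Icc 1 m, r i ω) - R|} ≤
      ENNReal.ofReal (2 * Real.exp (-((m : ℝ) * ε ^ 2) / (2 * Rmax ^ 2))) := by
  have hmpos : (0 : ℝ) < m := by exact_mod_cast hm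
  set S : Ω → ℝ := ∑ i ∈ Finset.Icc 1 m, r i with hS
  -- mgf bound for the sum
  have hmgfS : ∀ s : ℝ, mgf S μ s ≤ Real.exp ((m : ℝ) * (s * R + s ^ 2 * Rmax ^ 2 / 2)) := by
    intro s
    rw [hS, hindep.mgf_sum hmeas]
    calc ∏ i ∈ Finset.Icc 1 m, mgf (r i) μ s
        ≤ ∏ _i ∈ Finset.Icc 1 m, Real.exp (s * R + s ^ 2 * Rmax ^ 2 / 2) := by
          refine Finset.prod_le_prod (fun i _ => mgf_nonneg) (fun i hi => ?_)
          have h1 : 1 ≤ i := (Finset.mem_Icc.mp hi).1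
          exact mgf_bdd μ (r i) (hmeas i) Rmax R hRmax (hbdd i h1) (hmean i h1) s
      _ = Real.exp ((m : ℝ) * (s * R + s ^ 2 * Rmax ^ 2 / 2)) := by
          rw [Finset.prod_const, Nat.card_Icc, ← Real.exp_nat_mul]
          norm_num
  have hintS : ∀ s : ℝ, Integrable (fun ω => Real.exp (s * S ω)) μ := by
    intro s
    rw [hS]
    exact hindep.integrable_exp_mul_sum hmeas (fun i hi =>
      integrable_exp_mul_bdd μ (r i) (hmeas i) Rmax (hbdd i (Finset.mem_Icc.mp hi).1) s)
  -- upper tail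
  have hup : μ {ω | (m : ℝ) * (R + ε) ≤ S ω} ≤
      ENNReal.ofReal (Real.exp (-((m : ℝ) * ε ^ 2) / (2 * Rmax ^ 2))) := by
    have h := measure_ge_le_exp_mul_mgf (μ := μ) (X := S) ((m : ℝ) * (R + ε))
      (t := ε / Rmax ^ 2) (by positivity) (hintS _)
    rw [← ENNReal.ofReal_toReal (measure_ne_top μ _)]
    refine ENNReal.ofReal_le_ofReal (h.trans ?_)
    calc Real.exp (-(ε / Rmax ^ 2) * ((m : ℝ) * (R + ε))) * mgf S μ (ε / Rmax ^ 2)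
        ≤ Real.exp (-(ε / Rmax ^ 2) * ((m : ℝ) * (R + ε))) *
            Real.exp ((m : ℝ) * ((ε / Rmax ^ 2) * R + (ε / Rmax ^ 2) ^ 2 * Rmax ^ 2 / 2)) :=
          mul_le_mul_of_nonneg_left (hmgfS _) (Real.exp_pos _).le
      _ = Real.exp (-((m : ℝ) * ε ^ 2) / (2 * Rmax ^ 2)) := by
          rw [← Real.exp_add]; congr 1; field_simp; ring
  -- lower tail
  have hlo : μ {ω | S ω ≤ (m : ℝ) * (R - ε)} ≤
      ENNReal.ofReal (Real.exp (-((m : ℝ) * ε ^ 2) / (2 * Rmax ^ 2))) := by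
    have h := measure_le_le_exp_mul_mgf (μ := μ) (X := S) ((m : ℝ) * (R - ε))
      (t := -(ε / Rmax ^ 2)) (neg_nonpos.mpr (by positivity)) (hintS _)
    rw [← ENNReal.ofReal_toReal (measure_ne_top μ _)]
    refine ENNReal.ofReal_le_ofReal (h.trans ?_)
    calc Real.exp (- -(ε / Rmax ^ 2) * ((m : ℝ) * (R - ε))) * mgf S μ (-(ε / Rmax ^ 2))
        ≤ Real.exp (- -(ε / Rmax ^ 2) * ((m : ℝ) * (R - ε))) *
            Real.exp ((m : ℝ) * (-(ε / Rmax ^ 2) * R + (-(ε / Rmax ^ 2)) ^ 2 * Rmax ^ 2 / 2)) :=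
          mul_le_mul_of_nonneg_left (hmgfS _) (Real.exp_pos _).le
      _ = Real.exp (-((m : ℝ) * ε ^ 2) / (2 * Rmax ^ 2)) := by
          rw [← Real.exp_add]; congr 1; field_simp; ring
  -- combine
  have hsub : {ω | ε < |((m : ℝ))⁻¹ * (∑ i ∈ Finset.Icc 1 m, r i ω) - R|} ⊆
      {ω | (m : ℝ) * (R + ε) ≤ S ω} ∪ {ω | S ω ≤ (m : ℝ) * (R - ε)} := by
    intro ω hω
    simp only [Set.mem_setOf_eq] at hω
    have hSω : S ω = ∑ i ∈ Finset.Icc 1 m, r i ω := by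
      rw [hS]; simp [Finset.sum_apply]
    rcases lt_abs.mp hω with h | h
    · left
      simp only [Set.mem_setOf_eq, hSω]
      have h2 : R + ε < (m : ℝ)⁻¹ * ∑ i ∈ Finset.Icc 1 m, r i ω := by linarith
      have h3 := mul_lt_mul_of_pos_left h2 hmpos
      rw [← mul_assoc, mul_inv_cancel₀ hmpos.ne', one_mul] at h3
      linarith
    · right
      simp only [Set.mem_setOf_eq, hSω]
      rw [lt_neg] at h
      have h2 : (m : ℝ)⁻¹ * ∑ i ∈ Finset.Icc 1 m, r i ω < R - ε := by linarith
      have h3 := mul_lt_mul_of_pos_left h2 hmpos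
      rw [← mul_assoc, mul_inv_cancel₀ hmpos.ne', one_mul] at h3
      linarith
  calc μ {ω | ε < |((m : ℝ))⁻¹ * (∑ i ∈ Finset.Icc 1 m, r i ω) - R|}
      ≤ μ ({ω | (m : ℝ) * (R + ε) ≤ S ω} ∪ {ω | S ω ≤ (m : ℝ) * (R - ε)}) := measure_mono hsub
    _ ≤ μ {ω | (m : ℝ) * (R + ε) ≤ S ω} + μ {ω | S ω ≤ (m : ℝ) * (R - ε)} := measure_union_le _ _
    _ ≤ ENNReal.ofReal (Real.exp (-((m : ℝ) * ε ^ 2) / (2 * Rmax ^ 2))) +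
        ENNReal.ofReal (Real.exp (-((m : ℝ) * ε ^ 2) / (2 * Rmax ^ 2))) := add_le_add hup hlo
    _ = ENNReal.ofReal (2 * Real.exp (-((m : ℝ) * ε ^ 2) / (2 * Rmax ^ 2))) := by
        rw [← ENNReal.ofReal_add (Real.exp_pos _).le (Real.exp_pos _).le]
        congr 1; ring

/-- Deviation bound for an empirical mean with a random sample size `A ∈ [c·t, t]`:
Hoeffding's inequality plus a union bound over the possible values of `A` gives
`P(|r̄_A − R| > ε) ≤ 2·exp(−c·t·ε²/(4·R_max²))`, provided the union-bound factor
`(1−c)·t + 1` is absorbed, i.e. `(1−c)·t + 1 ≤ exp(c·t·ε²/(4·R_max²))`. -/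
theorem stmt_12 {Ω : Type*} [MeasurableSpace Ω] (μ : Measure Ω) [IsProbabilityMeasure μ]
    (r : ℕ → Ω → ℝ) (R Rmax : ℝ) (hRmax : 0 < Rmax)
    (hmeas : ∀ i, Measurable (r i))
    (hindep : iIndepFun r μ)
    (hident : ∀ i j, Measure.map (r i) μ = Measure.map (r j) μ)
    (hmean : ∀ i, 1 ≤ i → ∫ ω, r i ω ∂μ = R)
    (hbdd : ∀ i, 1 ≤ i → ∀ᵐ ω ∂μ, |r i ω| ≤ Rmax)
    (c : ℝ) (hc0 : 0 < c) (hc1 : c < 1)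
    (t : ℕ) (ht : 1 ≤ t) (hct : 1 ≤ c * t)
    (ε : ℝ) (hε : 0 < ε)
    (A : Ω → ℕ) (hA : Measurable A)
    (hAbdd : ∀ᵐ ω ∂μ, c * t ≤ (A ω : ℝ) ∧ (A ω : ℝ) ≤ t)
    (hlarge : (1 - c) * t + 1 ≤ Real.exp (c * t * ε ^ 2 / (4 * Rmax ^ 2))) :
    μ {ω | ε < |((A ω : ℝ))⁻¹ * (∑ i ∈ Finset.Icc 1 (A ω), r i ω) - R|} ≤
      ENNReal.ofReal (2 * Real.exp (-(c * t * ε ^ 2) / (4 * Rmax ^ 2))) := by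
  classical
  set Em : ℕ → Set Ω := fun m => {ω | ε < |((m : ℝ))⁻¹ * (∑ i ∈ Finset.Icc 1 m, r i ω) - R|}
    with hEm
  set s' : Finset ℕ := (Finset.Icc 1 t).filter (fun m => c * t ≤ (m : ℝ)) with hs'
  -- a.e. inclusion in the finite union
  have hincl : μ {ω | ε < |((A ω : ℝ))⁻¹ * (∑ i ∈ Finset.Icc 1 (A ω), r i ω) - R|} ≤
      μ (⋃ m ∈ s', A ⁻¹' {m} ∩ Em m) := by
    refine measure_mono_ae ?_
    filter_upwards [hAbdd] with ω hω hmem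
    obtain ⟨h1, h2⟩ := hω
    have hA1 : 1 ≤ A ω := by
      have : (1 : ℝ) ≤ (A ω : ℝ) := le_trans hct h1
      exact_mod_cast this
    have hAt : A ω ≤ t := by exact_mod_cast h2
    refine Set.mem_biUnion (show A ω ∈ s' from ?_) ?_
    · rw [hs', Finset.mem_filter, Finset.mem_Icc]
      exact ⟨⟨hA1, hAt⟩, h1⟩
    · exact ⟨rfl, hmem⟩
  -- union bound
  have hub : μ (⋃ m ∈ s', A ⁻¹' {m} ∩ Em m) ≤ ∑ m ∈ s', μ (Em m) := by
    refine (measure_biUnion_finset_le s' _).trans ?_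
    exact Finset.sum_le_sum fun m _ => measure_mono Set.inter_subset_right
  -- per-term bound
  have hK : ∀ m ∈ s', μ (Em m) ≤
      ENNReal.ofReal (2 * Real.exp (-(c * t * ε ^ 2) / (2 * Rmax ^ 2))) := by
    intro m hm
    rw [hs', Finset.mem_filter, Finset.mem_Icc] at hm
    obtain ⟨⟨hm1, hmt⟩, hmc⟩ := hm
    refine (tail_fixed μ r R Rmax hRmax hmeas hindep hmean hbdd ε hε m hm1).trans ?_
    refine ENNReal.ofReal_le_ofReal ?_
    have hle : -((m : ℝ) * ε ^ 2) / (2 * Rmax ^ 2) ≤ -(c * t * ε ^ 2) / (2 * Rmax ^ 2) := by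
      refine (div_le_div_iff_of_pos_right (by positivity)).mpr ?_
      have := mul_le_mul_of_nonneg_right hmc (sq_nonneg ε)
      linarith
    have := Real.exp_le_exp.mpr hle
    linarith
  -- cardinality bound
  have hsub2 : s' ⊆ Finset.Icc ⌈c * t⌉₊ t := by
    intro m hm
    rw [hs', Finset.mem_filter, Finset.mem_Icc] at hm
    rw [Finset.mem_Icc]
    exact ⟨Nat.ceil_le.mpr hm.2, hm.1.2⟩
  have hceil_le : ⌈c * t⌉₊ ≤ t := Nat.ceil_le.mpr (by
    calc c * t ≤ 1 * t := by apply mul_le_mul_of_nonneg_right hc1.le; positivity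
      _ = (t : ℝ) := one_mul _)
  have hcard : (s'.card : ℝ) ≤ (1 - c) * t + 1 := by
    have h1 : s'.card ≤ t + 1 - ⌈c * t⌉₊ := by
      have := Finset.card_le_card hsub2
      rwa [Nat.card_Icc] at this
    have h2 : ((t + 1 - ⌈c * t⌉₊ : ℕ) : ℝ) = (t : ℝ) + 1 - ⌈c * t⌉₊ := by
      rw [Nat.cast_sub (by omega)]
      push_cast; ring
    calc (s'.card : ℝ) ≤ ((t + 1 - ⌈c * t⌉₊ : ℕ) : ℝ) := by exact_mod_cast h1
      _ = (t : ℝ) + 1 - ⌈c * t⌉₊ := h2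
      _ ≤ (t : ℝ) + 1 - c * t := by
          have := Nat.le_ceil (c * t)
          linarith
      _ = (1 - c) * t + 1 := by ring
  -- put everything together
  set K : ℝ := 2 * Real.exp (-(c * t * ε ^ 2) / (2 * Rmax ^ 2)) with hKK
  have hK0 : 0 ≤ K := by positivity
  calc μ {ω | ε < |((A ω : ℝ))⁻¹ * (∑ i ∈ Finset.Icc 1 (A ω), r i ω) - R|}
      ≤ μ (⋃ m ∈ s', A ⁻¹' {m} ∩ Em m) := hincl
    _ ≤ ∑ m ∈ s', μ (Em m) := hub
    _ ≤ ∑ _m ∈ s', ENNReal.ofReal K := Finset.sum_le_sum hK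
    _ = s'.card • ENNReal.ofReal K := by rw [Finset.sum_const]
    _ = ENNReal.ofReal (s'.card * K) := by
        rw [nsmul_eq_mul, ← ENNReal.ofReal_natCast, ← ENNReal.ofReal_mul (by positivity)]
    _ ≤ ENNReal.ofReal (2 * Real.exp (-(c * t * ε ^ 2) / (4 * Rmax ^ 2))) := by
        refine ENNReal.ofReal_le_ofReal ?_
        calc (s'.card : ℝ) * K ≤ ((1 - c) * t + 1) * K := mul_le_mul_of_nonneg_right hcard hK0
          _ ≤ Real.exp (c * t * ε ^ 2 / (4 * Rmax ^ 2)) * K :=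
              mul_le_mul_of_nonneg_right hlarge hK0
          _ = 2 * Real.exp (-(c * t * ε ^ 2) / (4 * Rmax ^ 2)) := by
              rw [hKK, show Real.exp (c * ↑t * ε ^ 2 / (4 * Rmax ^ 2)) *
                  (2 * Real.exp (-(c * ↑t * ε ^ 2) / (2 * Rmax ^ 2))) =
                  2 * (Real.exp (c * ↑t * ε ^ 2 / (4 * Rmax ^ 2)) *
                  Real.exp (-(c * ↑t * ε ^ 2) / (2 * Rmax ^ 2))) by ring, ← Real.exp_add]
              congr 1
              field_simp
              ring
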